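/- (Proposition 1, uniqueness) Let N ≥ 2, 1/N = p_l < p_h < 1, integers 1 ≤ t < T, and suppose the linear program is feasible. Let f* be the threshold rule defined via k̄ = min{k′ : ((T−t)/T)·Σ_{k ≤ k′} [τ_d·μ(k;t) − τ_c·λ(k;t)] ≥ τ_d − τ_c}, with f*(k) = 1 for k < k̄, f*(k̄) = [ (T/(T−t))·(τ_d − τ_c) − Σ_{k=0}^{k̄−1} (τ_d·μ(k;t) − τ_c·λ(k;t)) ] / (τ_d·μ(k̄;t) − τ_c·λ(k̄;t)), and f*(k) = 0 for k > k̄. Then f* is the unique optimal solution: any feasible rule f with Σ_{k=0}^t λ(k;t) f(k) = Σ_{k=0}^t λ(k;t) f*(k) satisfies f(k) = f*(k) for all 0 ≤ k ≤ t. -/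

import Mathlib

open Finset

/-- `lam N t pl k` is the probability of `k` idle signals out of `t` when all `N`
users transmit with probability `pl`. -/
noncomputable def lam (N t : ℕ) (pl : ℝ) (k : ℕ) : ℝ :=
  (t.choose k : ℝ) * ((1 - pl) ^ N) ^ k * (1 - (1 - pl) ^ N) ^ (t - k)

/-- `mu N t pl ph k` is the probability of `k` idle signals out of `t` when exactly
one user transmits with probability `ph` and the others with `pl`. -/
noncomputable def mu (N t : ℕ) (pl ph : ℝ) (k : ℕ) : ℝ :=
  (t.choose k : ℝ) * ((1 - pl) ^ (N - 1) * (1 - ph)) ^ k *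
    (1 - (1 - pl) ^ (N - 1) * (1 - ph)) ^ (t - k)

/-- The cooperation throughput `τ_c = pl (1 - pl)^{N-1}`. -/
noncomputable def tauC (N : ℕ) (pl : ℝ) : ℝ := pl * (1 - pl) ^ (N - 1)

/-- The defection throughput `τ_d = ph (1 - pl)^{N-1}`. -/
noncomputable def tauD (N : ℕ) (pl ph : ℝ) : ℝ := ph * (1 - pl) ^ (N - 1)

/-- `f : {0,…,t} → [0,1]` is an intervention rule. -/
def IsRule (t : ℕ) (f : ℕ → ℝ) : Prop := ∀ k ≤ t, 0 ≤ f k ∧ f k ≤ 1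

/-- The left-hand side of the incentive constraint:
`((T−t)/T) · Σ_{k=0}^t [τ_d μ(k;t) − τ_c λ(k;t)] f(k)`. -/
noncomputable def incLHS (N t T : ℕ) (pl ph : ℝ) (f : ℕ → ℝ) : ℝ :=
  (((T : ℝ) - t) / T) * ∑ k ∈ Finset.range (t + 1),
    (tauD N pl ph * mu N t pl ph k - tauC N pl * lam N t pl k) * f k

/-- A feasible solution of the linear program: an intervention rule satisfying the
incentive constraint. -/
def Feasible (N t T : ℕ) (pl ph : ℝ) (f : ℕ → ℝ) : Prop :=
  IsRule t f ∧ incLHS N t T pl ph f ≥ tauD N pl ph - tauC N pl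

/-- The objective of the linear program: the expected transmission probability of the
intervention device under cooperation, `Σ_{k=0}^t λ(k;t) f(k)`. -/
noncomputable def objective (N t : ℕ) (pl : ℝ) (f : ℕ → ℝ) : ℝ :=
  ∑ k ∈ Finset.range (t + 1), lam N t pl k * f k

/-- The threshold intervention rule of Proposition 1: `f*(k) = 1` for `k < k̄`,
`f*(k) = 0` for `k > k̄`, and at `k = k̄` the value making the incentive constraint
bind. -/
noncomputable def thresholdRule (N t T : ℕ) (pl ph : ℝ) (kbar : ℕ) : ℕ → ℝ :=
  fun k =>
    if k < kbar then 1
    else if k = kbar then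
      ((T : ℝ) / ((T : ℝ) - t) * (tauD N pl ph - tauC N pl) -
          ∑ j ∈ Finset.range kbar,
            (tauD N pl ph * mu N t pl ph j - tauC N pl * lam N t pl j)) /
        (tauD N pl ph * mu N t pl ph kbar - tauC N pl * lam N t pl kbar)
    else 0


private lemma scale_ge {T t S D : ℝ} (hT : 0 < T) (hTt : 0 < T - t)
    (h : (T - t) / T * S ≥ D) : T / (T - t) * D ≤ S := by
  have hx : T / (T - t) * ((T - t) / T * S) = S := by
    field_simp
  have h2 := mul_le_mul_of_nonneg_left h (le_of_lt (div_pos hT hTt))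
  linarith

private lemma scale_lt {T t S D : ℝ} (hT : 0 < T) (hTt : 0 < T - t)
    (h : (T - t) / T * S < D) : S < T / (T - t) * D := by
  have hx : T / (T - t) * ((T - t) / T * S) = S := by
    field_simp
  have h2 := mul_lt_mul_of_pos_left h (div_pos hT hTt)
  linarith

private lemma mlr_key {a b : ℝ} (hb : 0 < b) (hba : b < a) (ha1 : a < 1)
    {t j k : ℕ} (hjk : j < k) (hkt : k ≤ t) {cj ck : ℝ} (hcj : 0 < cj) (hck : 0 < ck) :
    ck * b ^ k * (1 - b) ^ (t - k) * (cj * a ^ j * (1 - a) ^ (t - j)) <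
      cj * b ^ j * (1 - b) ^ (t - j) * (ck * a ^ k * (1 - a) ^ (t - k)) := by
  have ha0 : 0 < a := hb.trans hba
  have h1a : 0 < 1 - a := by linarith
  have h1b : 0 < 1 - b := by linarith
  obtain ⟨d, rfl⟩ : ∃ d, k = j + (d + 1) := ⟨k - j - 1, by omega⟩
  have ht1 : t - j = (t - (j + (d + 1))) + (d + 1) := by omega
  rw [ht1]
  set s := t - (j + (d + 1)) with hs
  have key : b ^ (d + 1) * (1 - a) ^ (d + 1) < a ^ (d + 1) * (1 - b) ^ (d + 1) := by
    rw [← mul_pow, ← mul_pow]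
    apply pow_lt_pow_left₀ (by nlinarith) (by positivity)
    omega
  have hK : (0:ℝ) < ck * cj * b ^ j * a ^ j * (1 - b) ^ s * (1 - a) ^ s := by positivity
  calc ck * b ^ (j + (d + 1)) * (1 - b) ^ s * (cj * a ^ j * (1 - a) ^ (s + (d + 1)))
      = (ck * cj * b ^ j * a ^ j * (1 - b) ^ s * (1 - a) ^ s) *
          (b ^ (d + 1) * (1 - a) ^ (d + 1)) := by ring
    _ < (ck * cj * b ^ j * a ^ j * (1 - b) ^ s * (1 - a) ^ s) *
          (a ^ (d + 1) * (1 - b) ^ (d + 1)) := mul_lt_mul_of_pos_left key hK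
    _ = cj * b ^ j * (1 - b) ^ (s + (d + 1)) * (ck * a ^ (j + (d + 1)) * (1 - a) ^ s) := by
        ring


private lemma kbar_le_aux (t : ℕ) (c f : ℕ → ℝ) (B : ℝ) (hB : 0 < B)
    (hinit : ∀ j k, j < k → k ≤ t → 0 < c k → 0 < c j)
    (hf01 : ∀ k ≤ t, 0 ≤ f k ∧ f k ≤ 1)
    (hfc : B ≤ ∑ k ∈ range (t + 1), c k * f k)
    (hmin : ∀ k' ≤ t, ∑ k ∈ range (k' + 1), c k < B) : False := by
  classical
  by_cases hex : ∃ m, m ≤ t ∧ c m ≤ 0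
  · set k0 := Nat.find hex with hk0
    obtain ⟨hk0t, hk0c⟩ := Nat.find_spec hex
    have hpos : ∀ m < k0, 0 < c m := by
      intro m hm
      have h := Nat.find_min hex hm
      push_neg at h
      exact h (by omega)
    have hnonpos : ∀ m, k0 ≤ m → m ≤ t → c m ≤ 0 := by
      intro m h1 h2
      rcases eq_or_lt_of_le h1 with h | h1
      · rw [← h]; exact hk0c
      · by_contra h
        push_neg at h
        exact absurd (hinit k0 m h1 h2 h) (not_lt.mpr hk0c)
    have hsplit : ∑ m ∈ range (t + 1), c m * f m
        = ∑ m ∈ range k0, c m * f m + ∑ m ∈ Ico k0 (t + 1), c m * f m := by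
      rw [range_eq_Ico,
        ← Finset.sum_Ico_consecutive _ (Nat.zero_le k0) (by omega : k0 ≤ t + 1),
        ← range_eq_Ico]
    have h1 : ∑ m ∈ range k0, c m * f m ≤ ∑ m ∈ range k0, c m := by
      apply Finset.sum_le_sum
      intro m hm
      have hm' := mem_range.mp hm
      have hb := hf01 m (by omega)
      nlinarith [hpos m hm']
    have h2 : ∑ m ∈ Ico k0 (t + 1), c m * f m ≤ 0 := by
      apply Finset.sum_nonpos
      intro m hm
      have hm' := Finset.mem_Ico.mp hm
      exact mul_nonpos_of_nonpos_of_nonneg (hnonpos m hm'.1 (by omega))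
        (hf01 m (by omega)).1
    have h3 : ∑ m ∈ range k0, c m < B := by
      rcases Nat.eq_zero_or_pos k0 with h | h
      · simpa [h] using hB
      · obtain ⟨m, hm⟩ : ∃ m, k0 = m + 1 := ⟨k0 - 1, by omega⟩
        rw [hm]
        exact hmin m (by omega)
    linarith
  · push_neg at hex
    have h1 : ∑ m ∈ range (t + 1), c m * f m ≤ ∑ m ∈ range (t + 1), c m := by
      apply Finset.sum_le_sum
      intro m hm
      have hm' : m ≤ t := by have := mem_range.mp hm; omega
      have hcp := hex m hm'
      have hb := hf01 m hm'
      nlinarith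
    linarith [hmin t le_rfl]

private lemma lp_unique_aux (t : ℕ) (L c f fstar : ℕ → ℝ) (B : ℝ)
    (hL : ∀ k ≤ t, 0 < L k)
    (hkey : ∀ j k, j < k → k ≤ t → c k * L j < c j * L k)
    (kbar : ℕ) (hkb : kbar ≤ t)
    (hf01 : ∀ k ≤ t, 0 ≤ f k ∧ f k ≤ 1)
    (hfc : B ≤ ∑ k ∈ range (t + 1), c k * f k)
    (hstar : ∑ k ∈ range (t + 1), c k * fstar k = B)
    (hstar1 : ∀ k < kbar, fstar k = 1)
    (hstar0 : ∀ k, kbar < k → fstar k = 0)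
    (hobj : ∑ k ∈ range (t + 1), L k * f k = ∑ k ∈ range (t + 1), L k * fstar k) :
    ∀ k ≤ t, f k = fstar k := by
  set g : ℕ → ℝ := fun k => f k - fstar k with hg
  have hsum_g_L : ∑ k ∈ range (t + 1), L k * g k = 0 := by
    simp only [hg, mul_sub, Finset.sum_sub_distrib, hobj, sub_self]
  have hsum_g_c : 0 ≤ ∑ k ∈ range (t + 1), c k * g k := by
    simp only [hg, mul_sub, Finset.sum_sub_distrib, hstar]
    linarith
  have hw_nonpos : ∀ m ∈ range (t + 1), (c m * L kbar - c kbar * L m) * g m ≤ 0 := by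
    intro m hm
    have hmt : m ≤ t := by have := mem_range.mp hm; omega
    rcases lt_trichotomy m kbar with h | h | h
    · have hcoef : 0 < c m * L kbar - c kbar * L m := by
        have := hkey m kbar h hkb; linarith
      have hgm : g m ≤ 0 := by
        have h2 := (hf01 m hmt).2
        simp only [hg, hstar1 m h]
        linarith
      exact mul_nonpos_of_nonneg_of_nonpos hcoef.le hgm
    · rw [h]
      simp
    · have hcoef : c m * L kbar - c kbar * L m < 0 := by
        have := hkey kbar m h hmt; linarith
      have hgm : 0 ≤ g m := by
        have h2 := (hf01 m hmt).1
        simp only [hg, hstar0 m h]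
        linarith
      exact mul_nonpos_of_nonpos_of_nonneg hcoef.le hgm
  have hw_sum : ∑ m ∈ range (t + 1), (c m * L kbar - c kbar * L m) * g m
      = L kbar * ∑ m ∈ range (t + 1), c m * g m := by
    have he : ∀ m, (c m * L kbar - c kbar * L m) * g m
        = L kbar * (c m * g m) - c kbar * (L m * g m) := fun m => by ring
    rw [Finset.sum_congr rfl fun m _ => he m, Finset.sum_sub_distrib,
      ← Finset.mul_sum, ← Finset.mul_sum, hsum_g_L, mul_zero, sub_zero]
  have hw_zero : ∀ m ∈ range (t + 1), (c m * L kbar - c kbar * L m) * g m = 0 := by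
    rw [← Finset.sum_eq_zero_iff_of_nonpos hw_nonpos]
    have h1 : 0 ≤ ∑ m ∈ range (t + 1), (c m * L kbar - c kbar * L m) * g m := by
      rw [hw_sum]
      exact mul_nonneg (hL kbar hkb).le hsum_g_c
    have h2 := Finset.sum_nonpos hw_nonpos
    linarith
  have hoff : ∀ m ≤ t, m ≠ kbar → g m = 0 := by
    intro m hmt hne
    have h0 := hw_zero m (mem_range.mpr (by omega))
    rcases mul_eq_zero.mp h0 with h' | h'
    · exfalso
      rcases lt_or_gt_of_ne hne with h | h
      · have := hkey m kbar h hkb; linarith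
      · have := hkey kbar m h hmt; linarith
    · exact h'
  have hkbar0 : g kbar = 0 := by
    have hs := hsum_g_L
    rw [Finset.sum_eq_single kbar
      (fun b hb hne => by rw [hoff b (by have := mem_range.mp hb; omega) hne, mul_zero])
      (fun h => absurd (mem_range.mpr (by omega)) h)] at hs
    rcases mul_eq_zero.mp hs with h' | h'
    · exact absurd h' (ne_of_gt (hL kbar hkb))
    · exact h'
  intro k hk
  have hgk : g k = 0 := by
    by_cases hkk : k = kbar
    · rw [hkk]; exact hkbar0
    · exact hoff k hk hkk
  have : f k - fstar k = 0 := hgk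
  linarith

/-- (Proposition 1, uniqueness) Suppose the linear program is feasible, and let `k̄`
be the smallest `k'` with `((T−t)/T)·Σ_{k ≤ k'} [τ_d μ(k;t) − τ_c λ(k;t)] ≥ τ_d − τ_c`.
Then the threshold rule `f*` associated with `k̄` is the unique optimal solution:
any feasible rule attaining the same objective value agrees with `f*` on `{0,…,t}`. -/
theorem threshold_rule_unique_optimum (N t T : ℕ) (pl ph : ℝ) (hN : 2 ≤ N)
    (hpl : pl = 1 / N) (hlh : pl < ph) (hph : ph < 1) (ht : 1 ≤ t) (htT : t < T)
    (hfeasLP : ∃ f : ℕ → ℝ, Feasible N t T pl ph f)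
    (kbar : ℕ)
    (hkbar : (((T : ℝ) - t) / T) * ∑ k ∈ Finset.range (kbar + 1),
        (tauD N pl ph * mu N t pl ph k - tauC N pl * lam N t pl k)
      ≥ tauD N pl ph - tauC N pl)
    (hkbarmin : ∀ k' < kbar, (((T : ℝ) - t) / T) * ∑ k ∈ Finset.range (k' + 1),
        (tauD N pl ph * mu N t pl ph k - tauC N pl * lam N t pl k)
      < tauD N pl ph - tauC N pl) :
    ∀ f : ℕ → ℝ, Feasible N t T pl ph f →
      objective N t pl f = objective N t pl (thresholdRule N t T pl ph kbar) →
      ∀ k ≤ t, f k = thresholdRule N t T pl ph kbar k := by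
  classical
  -- numeric groundwork
  have htR : (t : ℝ) < T := by exact_mod_cast htT
  have hT0 : (0 : ℝ) < T := by
    have : 0 < T := by omega
    exact_mod_cast this
  have hTt : (0 : ℝ) < (T : ℝ) - t := by linarith
  have hN2 : (2 : ℝ) ≤ (N : ℝ) := by exact_mod_cast hN
  have hpl0 : 0 < pl := by rw [hpl]; positivity
  have hpl1 : pl < 1 := by
    rw [hpl, div_lt_one (by linarith)]; linarith
  have h1pl : 0 < 1 - pl := by linarith
  have hph0 : 0 < ph := lt_trans hpl0 hlh
  have h1ph : 0 < 1 - ph := by linarith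
  -- the two binomial parameters
  set a : ℝ := (1 - pl) ^ N with hadef
  set b : ℝ := (1 - pl) ^ (N - 1) * (1 - ph) with hbdef
  have ha0 : 0 < a := by positivity
  have ha1 : a < 1 := by
    apply pow_lt_one₀ (by linarith) (by linarith) (by omega)
  have hb0 : 0 < b := by positivity
  have hba : b < a := by
    have : a = (1 - pl) ^ (N - 1) * (1 - pl) := by
      rw [hadef, ← pow_succ]
      congr 1
      omega
    rw [this, hbdef]
    have hp : 0 < (1 - pl) ^ (N - 1) := by positivity
    nlinarith
  -- positivity of lam, of tauD, and tauD - tauC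
  have hpow : 0 < (1 - pl) ^ (N - 1) := by positivity
  have htauD : 0 < tauD N pl ph := by
    rw [tauD]; positivity
  have htauDC : 0 < tauD N pl ph - tauC N pl := by
    rw [tauD, tauC]; nlinarith
  have hlam : ∀ k ≤ t, 0 < lam N t pl k := by
    intro k hk
    rw [lam]
    have hch : (0 : ℝ) < (t.choose k : ℝ) := by
      exact_mod_cast Nat.choose_pos hk
    rw [← hadef]
    have h1a : 0 < 1 - a := by linarith
    positivity
  have hmlr : ∀ j k, j < k → k ≤ t →
      mu N t pl ph k * lam N t pl j < mu N t pl ph j * lam N t pl k := by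
    intro j k hjk hkt
    have hcj : (0 : ℝ) < (t.choose j : ℝ) := by
      exact_mod_cast Nat.choose_pos (by omega : j ≤ t)
    have hck : (0 : ℝ) < (t.choose k : ℝ) := by
      exact_mod_cast Nat.choose_pos hkt
    rw [lam, lam, mu, mu, ← hadef, ← hbdef]
    exact mlr_key hb0 hba ha1 hjk hkt hcj hck
  -- abbreviations
  set c : ℕ → ℝ := fun k => tauD N pl ph * mu N t pl ph k - tauC N pl * lam N t pl k
    with hcdef
  set L : ℕ → ℝ := fun k => lam N t pl k with hLdef
  have hkey : ∀ j k, j < k → k ≤ t → c k * L j < c j * L k := by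
    intro j k hjk hkt
    have h1 := hmlr j k hjk hkt
    have h2 := mul_lt_mul_of_pos_left h1 htauD
    simp only [hcdef, hLdef]
    nlinarith
  have hinit : ∀ j k, j < k → k ≤ t → 0 < c k → 0 < c j := by
    intro j k hjk hkt hck
    have h1 := hkey j k hjk hkt
    have hLj := hlam j (by omega)
    have hLk := hlam k hkt
    simp only [hLdef] at h1
    nlinarith
  set B' : ℝ := (T : ℝ) / ((T : ℝ) - t) * (tauD N pl ph - tauC N pl) with hBdef
  have hB'pos : 0 < B' := by
    rw [hBdef]
    exact mul_pos (div_pos hT0 hTt) htauDC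
  -- conversions of the incentive hypotheses
  have hfc' : ∀ f : ℕ → ℝ, Feasible N t T pl ph f →
      B' ≤ ∑ k ∈ range (t + 1), c k * f k := by
    intro f hf
    have h := hf.2
    rw [incLHS] at h
    exact scale_ge hT0 hTt h
  have hmin' : ∀ k' < kbar, ∑ k ∈ range (k' + 1), c k < B' := by
    intro k' hk'
    exact scale_lt hT0 hTt (hkbarmin k' hk')
  have hkbar' : B' ≤ ∑ k ∈ range (kbar + 1), c k := scale_ge hT0 hTt hkbar
  -- kbar ≤ t
  obtain ⟨f0, hf0⟩ := hfeasLP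
  have hkbt : kbar ≤ t := by
    by_contra h
    push_neg at h
    exact kbar_le_aux t c f0 B' hB'pos hinit hf0.1 (hfc' f0 hf0)
      (fun k' hk' => hmin' k' (by omega))
  -- c kbar > 0
  have hck : 0 < c kbar := by
    rcases Nat.eq_zero_or_pos kbar with h | h
    · have := hkbar'
      rw [h, Finset.sum_range_one] at this
      rw [h]; linarith
    · obtain ⟨m, hm⟩ : ∃ m, kbar = m + 1 := ⟨kbar - 1, by omega⟩
      have h1 := hkbar'
      rw [Finset.sum_range_succ] at h1
      have h2 := hmin' m (by omega)
      rw [← hm] at h2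
      linarith
  -- the threshold rule binds the constraint
  set fstar := thresholdRule N t T pl ph kbar with hfstar
  have hstar1 : ∀ k < kbar, fstar k = 1 := by
    intro k hk
    simp [hfstar, thresholdRule, hk]
  have hstar0 : ∀ k, kbar < k → fstar k = 0 := by
    intro k hk
    rw [hfstar, thresholdRule]
    rw [if_neg (by omega), if_neg (by omega)]
  have hstarkb : fstar kbar = (B' - ∑ j ∈ range kbar, c j) / c kbar := by
    rw [hfstar, thresholdRule, if_neg (by omega), if_pos rfl]
  have hbind : ∑ k ∈ range (t + 1), c k * fstar k = B' := by
    have hss : ∑ k ∈ range (t + 1), c k * fstar k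
        = ∑ k ∈ range (kbar + 1), c k * fstar k := by
      refine (Finset.sum_subset (Finset.range_subset_range.mpr (by omega)) ?_).symm
      intro x hx hnx
      have hxk : kbar < x := by
        simp only [mem_range] at hnx
        omega
      rw [hstar0 x hxk, mul_zero]
    rw [hss, Finset.sum_range_succ]
    have h1 : ∑ k ∈ range kbar, c k * fstar k = ∑ k ∈ range kbar, c k := by
      apply Finset.sum_congr rfl
      intro k hk
      rw [hstar1 k (mem_range.mp hk), mul_one]
    rw [h1, hstarkb, mul_comm (c kbar), div_mul_cancel₀ _ (ne_of_gt hck)]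
    ring
  -- conclude via the abstract uniqueness lemma
  intro f hf hobj
  have hobj' : ∑ k ∈ range (t + 1), L k * f k = ∑ k ∈ range (t + 1), L k * fstar k := by
    have := hobj
    rw [objective, objective] at this
    exact this
  exact lp_unique_aux t L c f fstar B' hlam hkey kbar hkbt hf.1 (hfc' f hf)
    hbind hstar1 hstar0 hobj'
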